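/- arXiv:2004.00359 — 4 statements merged into one kernel-verified Lean document; each statement's English description precedes it below -/
import Mathlib

section
/- For symmetric positive-definite matrices M_h, M_e, M_{p,i}, M_{d,i} and any matrix C, suppose sequences h^{n+1/2}, e^n, p_i^n satisfy the leapfrog scheme: M_h (h^{n+1/2}-h^{n-1/2})/τ + C e^n = 0, M_e (e^{n+1}-e^n)/τ + Σ_i (p_i^{n+1}-p_i^n)/τ - Cᵀ h^{n+1/2} = 0, and M_{d,i}(p_i^{n+1}-p_i^n)/τ + M_{p,i}(p_i^{n+1}+p_i^n)/2 = (e^{n+1}+e^n)/2. Define the discrete energy E^n = ½( (h^{n+1/2})ᵀ M_h h^{n-1/2} + (e^n)ᵀ M_e e^n + Σ_i (p_i^n)ᵀ M_{p,i} p_i^n ). Then for all n ≥ 0, (E^{n+1} - E^n)/τ = - Σ_i ((p_i^{n+1}-p_i^n)/τ)ᵀ M_{d,i} ((p_i^{n+1}-p_i^n)/τ). -/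
open Matrix

lemma my_sym {k : ℕ} (M : Matrix (Fin k) (Fin k) ℝ) (hM : M.PosDef) (x y : Fin k → ℝ) :
    x ⬝ᵥ M *ᵥ y = y ⬝ᵥ M *ᵥ x := by
  rw [Matrix.dotProduct_mulVec, ← Matrix.mulVec_transpose,
    show Mᵀ = M from hM.isHermitian, dotProduct_comm]

lemma my_symT {a b : ℕ} (C : Matrix (Fin a) (Fin b) ℝ) (x : Fin b → ℝ) (y : Fin a → ℝ) :
    x ⬝ᵥ Cᵀ *ᵥ y = y ⬝ᵥ C *ᵥ x := by
  rw [Matrix.dotProduct_mulVec, ← Matrix.mulVec_transpose, Matrix.transpose_transpose,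
    dotProduct_comm]

lemma my_dotProduct_sum {k : ℕ} {ι : Type*} (s : Finset ι) (v : Fin k → ℝ)
    (f : ι → Fin k → ℝ) : v ⬝ᵥ (∑ i ∈ s, f i) = ∑ i ∈ s, v ⬝ᵥ f i := by
  classical
  induction s using Finset.induction with
  | empty => simp
  | insert _ _ hix ih => simp [Finset.sum_insert hix, dotProduct_add, ih]

/-- Discrete energy-dissipation identity for the leapfrog scheme for
Maxwell's equations in dispersive (multipole Debye) media.
Here `h n` denotes `h^{n-1/2}` (so `h (n+1) = h^{n+1/2}`), `e n = e^n`,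
and `p i n = p_i^n`. -/
theorem leapfrog_energy_dissipation {Nh Ne m : ℕ} (τ : ℝ) (hτ : 0 < τ)
    (Mh : Matrix (Fin Nh) (Fin Nh) ℝ) (Me : Matrix (Fin Ne) (Fin Ne) ℝ)
    (Mp Md : Fin m → Matrix (Fin Ne) (Fin Ne) ℝ)
    (C : Matrix (Fin Nh) (Fin Ne) ℝ)
    (hMh : Mh.PosDef) (hMe : Me.PosDef)
    (hMp : ∀ i, (Mp i).PosDef) (hMd : ∀ i, (Md i).PosDef)
    (h : ℕ → Fin Nh → ℝ) (e : ℕ → Fin Ne → ℝ) (p : Fin m → ℕ → Fin Ne → ℝ)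
    (heq1 : ∀ n, Mh *ᵥ (τ⁻¹ • (h (n + 1) - h n)) + C *ᵥ e n = 0)
    (heq2 : ∀ n, Me *ᵥ (τ⁻¹ • (e (n + 1) - e n))
        + ∑ i, τ⁻¹ • (p i (n + 1) - p i n) - Cᵀ *ᵥ h (n + 1) = 0)
    (heq3 : ∀ i n, Md i *ᵥ (τ⁻¹ • (p i (n + 1) - p i n))
        + Mp i *ᵥ ((2 : ℝ)⁻¹ • (p i (n + 1) + p i n))
        = (2 : ℝ)⁻¹ • (e (n + 1) + e n))
    (E : ℕ → ℝ)
    (hE : ∀ n, E n = (1 / 2) * (h (n + 1) ⬝ᵥ Mh *ᵥ h n + e n ⬝ᵥ Me *ᵥ e n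
        + ∑ i, p i n ⬝ᵥ Mp i *ᵥ p i n)) :
    ∀ n, (E (n + 1) - E n) / τ
      = - ∑ i, (τ⁻¹ • (p i (n + 1) - p i n)) ⬝ᵥ Md i *ᵥ (τ⁻¹ • (p i (n + 1) - p i n)) := by
  intro n
  have hτ0 : τ ≠ 0 := ne_of_gt hτ
  -- h part
  have q1 : ∀ k, h (n+1) ⬝ᵥ Mh *ᵥ h (k+1) - h (n+1) ⬝ᵥ Mh *ᵥ h k
      = -(τ * (h (n+1) ⬝ᵥ C *ᵥ e k)) := by
    intro k
    have q := congrArg (fun v => h (n+1) ⬝ᵥ v) (heq1 k)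
    simp only [Matrix.mulVec_smul, Matrix.mulVec_sub, dotProduct_add, dotProduct_sub,
      dotProduct_smul, smul_eq_mul, dotProduct_zero] at q
    field_simp at q
    linarith [q]
  -- e part
  have q2 : (e (n+1) ⬝ᵥ Me *ᵥ e (n+1) - e n ⬝ᵥ Me *ᵥ e n)
      + ∑ i, ((e (n+1) + e n) ⬝ᵥ (p i (n+1) - p i n))
      = τ * ((e (n+1) + e n) ⬝ᵥ Cᵀ *ᵥ h (n+1)) := by
    have q := congrArg (fun v => (e (n+1) + e n) ⬝ᵥ v) (heq2 n)
    simp only [Matrix.mulVec_smul, Matrix.mulVec_sub, Matrix.mulVec_add, dotProduct_add,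
      dotProduct_sub, dotProduct_smul, smul_eq_mul, dotProduct_zero,
      my_dotProduct_sum] at q
    have hc : (e (n+1) + e n) ⬝ᵥ Me *ᵥ e (n+1) - (e (n+1) + e n) ⬝ᵥ Me *ᵥ e n
        = e (n+1) ⬝ᵥ Me *ᵥ e (n+1) - e n ⬝ᵥ Me *ᵥ e n := by
      simp only [add_dotProduct, my_sym Me hMe (e n) (e (n+1))]
      ring
    have hs : ∑ x, τ⁻¹ * ((e (n+1) + e n) ⬝ᵥ p x (n+1) - (e (n+1) + e n) ⬝ᵥ p x n)
        = τ⁻¹ * ∑ x, (e (n+1) + e n) ⬝ᵥ (p x (n+1) - p x n) := by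
      rw [Finset.mul_sum]
      exact Finset.sum_congr rfl fun x _ => by rw [dotProduct_sub]
    rw [hc, hs, inv_mul_eq_div, inv_mul_eq_div, ← add_div, sub_eq_zero,
      div_eq_iff hτ0] at q
    linarith [q]
  -- p part
  have q3 : ∀ i, p i (n+1) ⬝ᵥ Mp i *ᵥ p i (n+1) - p i n ⬝ᵥ Mp i *ᵥ p i n
      = (e (n+1) + e n) ⬝ᵥ (p i (n+1) - p i n)
        - (2 / τ) * ((p i (n+1) - p i n) ⬝ᵥ Md i *ᵥ (p i (n+1) - p i n)) := by
    intro i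
    have q := congrArg (fun v => (p i (n+1) - p i n) ⬝ᵥ v) (heq3 i n)
    simp only [Matrix.mulVec_smul, Matrix.mulVec_sub, Matrix.mulVec_add, dotProduct_add,
      dotProduct_sub, dotProduct_smul, smul_eq_mul] at q
    have hc : (p i (n+1) - p i n) ⬝ᵥ Mp i *ᵥ p i (n+1) + (p i (n+1) - p i n) ⬝ᵥ Mp i *ᵥ p i n
        = p i (n+1) ⬝ᵥ Mp i *ᵥ p i (n+1) - p i n ⬝ᵥ Mp i *ᵥ p i n := by
      simp only [sub_dotProduct, my_sym (Mp i) (hMp i) (p i n) (p i (n+1))]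
      ring
    have hcomm : (e (n+1) + e n) ⬝ᵥ (p i (n+1) - p i n)
        = (p i (n+1) - p i n) ⬝ᵥ e (n+1) + (p i (n+1) - p i n) ⬝ᵥ e n := by
      rw [dotProduct_comm, dotProduct_add]
    have hd : (p i (n+1) - p i n) ⬝ᵥ Md i *ᵥ (p i (n+1) - p i n)
        = (p i (n+1) - p i n) ⬝ᵥ Md i *ᵥ p i (n+1) - (p i (n+1) - p i n) ⬝ᵥ Md i *ᵥ p i n := by
      rw [Matrix.mulVec_sub, dotProduct_sub]
    rw [hc] at q
    rw [hcomm, hd]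
    linear_combination 2 * q
  have q3s : (∑ i, p i (n+1) ⬝ᵥ Mp i *ᵥ p i (n+1)) - ∑ i, p i n ⬝ᵥ Mp i *ᵥ p i n
      = (∑ i, (e (n+1) + e n) ⬝ᵥ (p i (n+1) - p i n))
        - (2 / τ) * ∑ i, (p i (n+1) - p i n) ⬝ᵥ Md i *ᵥ (p i (n+1) - p i n) := by
    rw [← Finset.sum_sub_distrib, Finset.mul_sum, ← Finset.sum_sub_distrib]
    exact Finset.sum_congr rfl fun i _ => q3 i
  -- assemble
  have hT : (e (n+1) + e n) ⬝ᵥ Cᵀ *ᵥ h (n+1)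
      = h (n+1) ⬝ᵥ C *ᵥ e (n+1) + h (n+1) ⬝ᵥ C *ᵥ e n := by
    rw [my_symT C _ _, Matrix.mulVec_add, dotProduct_add]
  rw [hT] at q2
  have e1 := q1 n
  have e2 := q1 (n+1)
  have total : (h (n+1) ⬝ᵥ Mh *ᵥ h (n+1+1) + e (n+1) ⬝ᵥ Me *ᵥ e (n+1)
        + ∑ i, p i (n+1) ⬝ᵥ Mp i *ᵥ p i (n+1))
      - (h (n+1) ⬝ᵥ Mh *ᵥ h n + e n ⬝ᵥ Me *ᵥ e n + ∑ i, p i n ⬝ᵥ Mp i *ᵥ p i n)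
      = -((2 / τ) * ∑ i, (p i (n+1) - p i n) ⬝ᵥ Md i *ᵥ (p i (n+1) - p i n)) := by
    linarith [e1, e2, q2, q3s]
  have hsym2 : h (n+1+1) ⬝ᵥ Mh *ᵥ h (n+1) = h (n+1) ⬝ᵥ Mh *ᵥ h (n+1+1) :=
    my_sym Mh hMh _ _
  have hfin : E (n+1) - E n
      = (1/2) * ((h (n+1) ⬝ᵥ Mh *ᵥ h (n+1+1) + e (n+1) ⬝ᵥ Me *ᵥ e (n+1)
        + ∑ i, p i (n+1) ⬝ᵥ Mp i *ᵥ p i (n+1))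
      - (h (n+1) ⬝ᵥ Mh *ᵥ h n + e n ⬝ᵥ Me *ᵥ e n + ∑ i, p i n ⬝ᵥ Mp i *ᵥ p i n)) := by
    rw [hE (n+1), hE n, hsym2]
    ring
  have hgoal : ∀ i : Fin m, (τ⁻¹ • (p i (n+1) - p i n)) ⬝ᵥ Md i *ᵥ (τ⁻¹ • (p i (n+1) - p i n))
      = τ⁻¹ * (τ⁻¹ * ((p i (n+1) - p i n) ⬝ᵥ Md i *ᵥ (p i (n+1) - p i n))) := by
    intro i
    rw [Matrix.mulVec_smul, dotProduct_smul, smul_dotProduct, smul_eq_mul, smul_eq_mul]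
  have hR : ∑ i, (τ⁻¹ • (p i (n+1) - p i n)) ⬝ᵥ Md i *ᵥ (τ⁻¹ • (p i (n+1) - p i n))
      = τ⁻¹ * (τ⁻¹ * ∑ i, (p i (n+1) - p i n) ⬝ᵥ Md i *ᵥ (p i (n+1) - p i n)) := by
    rw [Finset.mul_sum, Finset.mul_sum]
    exact Finset.sum_congr rfl fun i _ => hgoal i
  rw [hR, hfin, total]
  field_simp
end

section
/- Under the CFL condition τ² ‖C e‖²_{M_h^{-1}} ≤ ‖e‖²_{M_e} for all e, and the relation M_h(h^{k+1/2}-h^{k-1/2}) = -τ C e^k, the quantity E^k = ½( (h^{k+1/2})ᵀ M_h h^{k-1/2} + ‖e^k‖²_{M_e} + Σ_i ‖p_i^k‖²_{M_{p,i}} ) is nonnegative; in particular E^k ≥ ¼ ‖h^{k+1/2}‖²_{M_h} + ¼ ‖e^k‖²_{M_e}. -/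
open Matrix

lemma quad_nonneg {n : ℕ} {M : Matrix (Fin n) (Fin n) ℝ} (hM : M.PosSemidef)
    (x : Fin n → ℝ) : 0 ≤ x ⬝ᵥ M *ᵥ x := by
  simpa using hM.re_dotProduct_nonneg x

lemma symm_dot {n : ℕ} {M : Matrix (Fin n) (Fin n) ℝ} (hM : M.IsHermitian)
    (x y : Fin n → ℝ) : x ⬝ᵥ M *ᵥ y = y ⬝ᵥ M *ᵥ x := by
  have hMt : Mᵀ = M := by
    have := hM.eq
    simpa [Matrix.conjTranspose_eq_transpose_of_trivial] using this
  rw [Matrix.dotProduct_mulVec, ← hMt, Matrix.vecMul_transpose, hMt,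
    dotProduct_comm]

/-- Nonnegativity of the discrete energy under the CFL condition.
Here `h0 = h^{k-1/2}`, `h1 = h^{k+1/2}`, `ek = e^k`, `pk i = p_i^k`. -/
theorem discrete_energy_nonneg {Nh Ne m : ℕ} (τ : ℝ) (hτ : 0 < τ)
    (Mh : Matrix (Fin Nh) (Fin Nh) ℝ) (Me : Matrix (Fin Ne) (Fin Ne) ℝ)
    (Mp : Fin m → Matrix (Fin Ne) (Fin Ne) ℝ)
    (C : Matrix (Fin Nh) (Fin Ne) ℝ)
    (hMh : Mh.PosDef) (hMe : Me.PosDef) (hMp : ∀ i, (Mp i).PosDef)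
    (hCFL : ∀ e : Fin Ne → ℝ,
      τ ^ 2 * ((C *ᵥ e) ⬝ᵥ Mh⁻¹ *ᵥ (C *ᵥ e)) ≤ e ⬝ᵥ Me *ᵥ e)
    (h0 h1 : Fin Nh → ℝ) (ek : Fin Ne → ℝ) (pk : Fin m → Fin Ne → ℝ)
    (hrel : Mh *ᵥ (τ⁻¹ • (h1 - h0)) + C *ᵥ ek = 0)
    (E : ℝ)
    (hE : E = (1 / 2) * (h1 ⬝ᵥ Mh *ᵥ h0 + ek ⬝ᵥ Me *ᵥ ek
        + ∑ i, pk i ⬝ᵥ Mp i *ᵥ pk i)) :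
    0 ≤ E ∧
      E ≥ (1 / 4) * (h1 ⬝ᵥ Mh *ᵥ h1) + (1 / 4) * (ek ⬝ᵥ Me *ᵥ ek) := by
  set w : Fin Nh → ℝ := C *ᵥ ek with hw
  set a := h1 ⬝ᵥ Mh *ᵥ h1 with ha
  set b := ek ⬝ᵥ Me *ᵥ ek with hb
  set s := ∑ i, pk i ⬝ᵥ Mp i *ᵥ pk i with hs
  have ha0 : 0 ≤ a := quad_nonneg hMh.posSemidef h1
  have hb0 : 0 ≤ b := quad_nonneg hMe.posSemidef ek
  have hs0 : 0 ≤ s := Finset.sum_nonneg fun i _ =>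
    quad_nonneg (hMp i).posSemidef (pk i)
  -- step 1: Mh *ᵥ h0 = Mh *ᵥ h1 + τ • w
  have hrel' : Mh *ᵥ h0 = Mh *ᵥ h1 + τ • w := by
    have h1' : τ⁻¹ • (Mh *ᵥ (h1 - h0)) = -w := by
      rw [← Matrix.mulVec_smul]
      exact eq_neg_of_add_eq_zero_left hrel
    have h2' : Mh *ᵥ (h1 - h0) = -(τ • w) := by
      have := congrArg (fun v => τ • v) h1'
      simpa [smul_smul, mul_inv_cancel₀ hτ.ne', smul_neg] using this
    have h3' : Mh *ᵥ h1 - Mh *ᵥ h0 = -(τ • w) := by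
      rw [← Matrix.mulVec_sub]; exact h2'
    funext i
    have h4 := congrFun h3' i
    simp only [Pi.sub_apply, Pi.neg_apply, Pi.smul_apply, Pi.add_apply,
      smul_eq_mul] at h4 ⊢
    linarith
  -- step 2: c = a + τ * (h1 ⬝ᵥ w)
  have hc : h1 ⬝ᵥ Mh *ᵥ h0 = a + τ * (h1 ⬝ᵥ w) := by
    rw [hrel', dotProduct_add, dotProduct_smul, ha, smul_eq_mul]
  -- step 3: quadratic inequality
  have hdet : IsUnit Mh.det := isUnit_iff_ne_zero.mpr hMh.det_pos.ne'
  have hMhinv : Mh *ᵥ (Mh⁻¹ *ᵥ w) = w := by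
    rw [Matrix.mulVec_mulVec, Matrix.mul_nonsing_inv Mh hdet, Matrix.one_mulVec]
  have hquad : 0 ≤ (h1 + τ • (Mh⁻¹ *ᵥ w)) ⬝ᵥ Mh *ᵥ (h1 + τ • (Mh⁻¹ *ᵥ w)) :=
    quad_nonneg hMh.posSemidef _
  have hexp : (h1 + τ • (Mh⁻¹ *ᵥ w)) ⬝ᵥ Mh *ᵥ (h1 + τ • (Mh⁻¹ *ᵥ w))
      = a + 2 * τ * (h1 ⬝ᵥ w) + τ ^ 2 * (w ⬝ᵥ Mh⁻¹ *ᵥ w) := by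
    have hcross : (Mh⁻¹ *ᵥ w) ⬝ᵥ Mh *ᵥ h1 = h1 ⬝ᵥ w := by
      rw [symm_dot hMh.isHermitian, hMhinv]
    have huw : (Mh⁻¹ *ᵥ w) ⬝ᵥ w = w ⬝ᵥ Mh⁻¹ *ᵥ w := dotProduct_comm _ _
    rw [Matrix.mulVec_add, Matrix.mulVec_smul, hMhinv]
    rw [dotProduct_add, add_dotProduct, add_dotProduct,
      dotProduct_smul, smul_dotProduct, smul_dotProduct, dotProduct_smul]
    rw [hcross, huw]
    simp only [smul_eq_mul]
    ring
  have hCFL' : τ ^ 2 * (w ⬝ᵥ Mh⁻¹ *ᵥ w) ≤ b := hCFL ek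
  have hkey : 0 ≤ a + 2 * τ * (h1 ⬝ᵥ w) + b := by
    rw [hexp] at hquad; linarith
  constructor
  · rw [hE, hc]; nlinarith
  · rw [hE, hc, ge_iff_le]; nlinarith
end

section
/- Let χ̂(s) = Σ_{i=1}^m a_i/(1+s τ_i) with a_i ≥ 0, τ_i > 0, and let ω_n be the coefficients of the power series expansion of χ̂(2(1−ξ)/(τ(1+ξ))) in ξ. Suppose for each i, sequences p_i^n with p_i^0 = 0 satisfy the trapezoidal recursion τ_i(p_i^{n+1}-p_i^n)/τ + (p_i^{n+1}+p_i^n)/2 = a_i (e^{n+1}+e^n)/2, where e^0 = 0. Then the total polarization p^n = Σ_{i=1}^m p_i^n satisfies the convolution quadrature formula p^n = Σ_{k=0}^n ω_{n−k} e^k for all n ≥ 0. -/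
open FormalMultilinearSeries

lemma coeffs_eq_zero_of_hasSum_zero (c : ℕ → ℝ) {ε : ℝ} (hε : 0 < ε)
    (h : ∀ ξ : ℝ, |ξ| < ε → HasSum (fun n => c n * ξ ^ n) (0:ℝ)) : ∀ n, c n = 0 := by
  set q : FormalMultilinearSeries ℝ ℝ ℝ := ofScalars ℝ c with hq
  have happ : ∀ (n : ℕ) (ξ : ℝ), q n (fun _ => ξ) = c n * ξ ^ n := by
    intro n ξ
    simp [hq, ofScalars, smul_eq_mul, List.prod_ofFn]
  have hnorm : ∀ n, ‖q n‖ = ‖c n‖ := fun n => ofScalars_norm ℝ c n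
  have hε2 : (0:ℝ) < ε / 2 := by linarith
  have hrad : ENNReal.ofReal (ε / 2) ≤ q.radius := by
    have hsum := (h (ε/2) (by rw [abs_of_pos hε2]; linarith)).summable
    have hsum' : Summable fun n => ‖q n‖ * ((ε/2).toNNReal : ℝ) ^ n := by
      refine hsum.abs.congr fun n => ?_
      rw [hnorm, Real.coe_toNNReal _ hε2.le, abs_mul, abs_pow, abs_of_pos hε2]
      rfl
    exact q.le_radius_of_summable_norm hsum'
  have hball : HasFPowerSeriesOnBall (0 : ℝ → ℝ) q 0 (ENNReal.ofReal (ε/2)) := by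
    refine ⟨hrad, by simp [hε2], ?_⟩
    intro y hy
    rw [mem_emetric_ball_zero_iff] at hy
    have hy' : |y| < ε := by
      have h3 : ‖y‖₊ < (ε/2).toNNReal := by
        exact_mod_cast (by simpa [ENNReal.ofReal] using hy : (‖y‖₊ : ENNReal) < ((ε/2).toNNReal : ENNReal))
      have h4 : ‖y‖ < ε / 2 := by
        have h5 := NNReal.coe_lt_coe.mpr h3
        rwa [coe_nnnorm, Real.coe_toNNReal _ hε2.le] at h5
      calc |y| = ‖y‖ := rfl
        _ < ε / 2 := h4
        _ < ε := by linarith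
    have := h y hy'
    simp only [Pi.zero_apply, zero_add]
    exact this.congr_fun fun n => happ n y
  have hz : q = 0 := HasFPowerSeriesAt.eq_zero ⟨_, hball⟩
  intro n
  have := congrFun hz n
  rwa [hq, FormalMultilinearSeries.zero_apply, ofScalars_eq_zero] at this

/-- Convolution quadrature weights for a single Debye pole. -/
noncomputable def cqW (B A : ℝ) : ℕ → ℝ
  | 0 => B
  | n + 1 => B * (1 + A) * A ^ n

/-- Equivalence of the internal-state trapezoidal scheme and the convolution
quadrature formula for the multipole Debye model: if `ω n` are the Taylor
coefficients at `ξ = 0` of `ξ ↦ χ̂(2(1-ξ)/(τ(1+ξ))) = ∑ i, aᵢτ(1+ξ)/(τ(1+ξ)+2τᵢ(1-ξ))`,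
then the total polarization `p^n = ∑ i, pᵢ^n` is the discrete convolution of the
weights with the electric field history. -/
theorem debye_convolution_quadrature_equivalence {N m : ℕ}
    (τ : ℝ) (hτ : 0 < τ) (a τi : Fin m → ℝ)
    (ha : ∀ i, 0 ≤ a i) (hτi : ∀ i, 0 < τi i)
    (ω : ℕ → ℝ)
    (hω : ∃ ε > 0, ∀ ξ : ℝ, |ξ| < ε →
      HasSum (fun n => ω n * ξ ^ n)
        (∑ i, a i * τ * (1 + ξ) / (τ * (1 + ξ) + 2 * τi i * (1 - ξ))))
    (e : ℕ → Fin N → ℝ) (he0 : e 0 = 0)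
    (p : Fin m → ℕ → Fin N → ℝ) (hp0 : ∀ i, p i 0 = 0)
    (hrec : ∀ i n, τi i • (τ⁻¹ • (p i (n + 1) - p i n))
        + (2 : ℝ)⁻¹ • (p i (n + 1) + p i n)
        = a i • ((2 : ℝ)⁻¹ • (e (n + 1) + e n))) :
    ∀ n, (∑ i, p i n) = ∑ k ∈ Finset.range (n + 1), ω (n - k) • e k := by
  obtain ⟨ε, hε, hωs⟩ := hω
  obtain ⟨A, hA⟩ : ∃ A : Fin m → ℝ, A = fun i => (2 * τi i - τ) / (2 * τi i + τ) := ⟨_, rfl⟩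
  obtain ⟨B, hB⟩ : ∃ B : Fin m → ℝ, B = fun i => a i * τ / (τ + 2 * τi i) := ⟨_, rfl⟩
  obtain ⟨w, hw⟩ : ∃ w : Fin m → ℕ → ℝ, w = fun i => cqW (B i) (A i) := ⟨_, rfl⟩
  have hden : ∀ i, (0:ℝ) < 2 * τi i + τ := fun i => by have := hτi i; linarith
  -- Step 1: recursion in explicit form
  have key2 : ∀ i n, p i (n+1) = A i • p i n + B i • (e (n+1) + e n) := by
    intro i n
    funext x
    have h := congrFun (hrec i n) x
    have hd : (2 * τi i + τ) ≠ 0 := (hden i).ne'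
    have hd' : (τ + 2 * τi i) ≠ 0 := by linarith [hτi i]
    simp only [Pi.add_apply, Pi.smul_apply, Pi.sub_apply, smul_eq_mul, hA, hB] at h ⊢
    field_simp at h
    have hstep : p i (n+1) x = ((2 * τi i - τ) * p i n x
        + a i * τ * (e (n+1) x + e n x)) / (2 * τi i + τ) := by
      rw [eq_div_iff hd]
      linear_combination h
    rw [hstep]
    field_simp
    ring
  -- Step 2: sum identity
  have sum_step : ∀ i n, ∑ k ∈ Finset.range (n+2), w i (n+1-k) • e k
      = A i • (∑ k ∈ Finset.range (n+1), w i (n-k) • e k) + B i • (e (n+1) + e n) := by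
    intro i n
    rw [Finset.sum_range_succ]
    have h1 : ∀ k ∈ Finset.range (n+1),
        w i (n+1-k) • e k
          = (A i • (w i (n-k) • e k)) + (if k = n then B i • e k else 0) := by
      intro k hk
      rcases eq_or_lt_of_le (Finset.mem_range_succ_iff.mp hk) with hkn | hkn
      · subst hkn
        rw [if_pos rfl, show k + 1 - k = 1 from by omega, Nat.sub_self]
        rw [hw]
        show (cqW (B i) (A i) 1) • e k = A i • (cqW (B i) (A i) 0) • e k + B i • e k
        rw [smul_smul, ← add_smul]
        show (B i * (1 + A i) * A i ^ 0) • e k = (A i * B i + B i) • e k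
        congr 1; ring
      · rw [if_neg hkn.ne, add_zero]
        rw [show n + 1 - k = (n - k - 1) + 2 from by omega, show n - k = (n - k - 1) + 1 from by omega]
        rw [hw]
        show (cqW (B i) (A i) ((n-k-1)+2)) • e k = A i • (cqW (B i) (A i) ((n-k-1)+1)) • e k
        rw [smul_smul]
        show (B i * (1 + A i) * A i ^ (n-k-1+1)) • e k = (A i * (B i * (1 + A i) * A i ^ (n-k-1))) • e k
        congr 1; ring
    rw [Finset.sum_congr rfl h1, Finset.sum_add_distrib]
    have h2 : ∑ k ∈ Finset.range (n+1), (if k = n then B i • e k else 0)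
        = B i • e n := by
      rw [Finset.sum_ite_eq' (Finset.range (n+1)) n (fun k => B i • e k)]
      simp
    rw [h2, ← Finset.smul_sum]
    have h3 : w i (n+1-(n+1)) = B i := by simp [hw, cqW]
    rw [h3, smul_add]
    abel
  -- Step 3: closed formula for each pole
  have formula : ∀ i n, p i n = ∑ k ∈ Finset.range (n+1), w i (n-k) • e k := by
    intro i n
    induction n with
    | zero => simp [hp0 i, he0]
    | succ n ih => rw [key2 i n, ih, ← sum_step i n]
  -- Step 4: the weights sum to the transfer function
  have hws : ∀ i (ξ : ℝ), |ξ| < 1 → HasSum (fun n => w i n * ξ ^ n)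
      (a i * τ * (1 + ξ) / (τ * (1 + ξ) + 2 * τi i * (1 - ξ))) := by
    intro i ξ hξ
    have hd : (2 * τi i + τ) ≠ 0 := (hden i).ne'
    have hAlt : |A i| < 1 := by
      rw [hA]
      rw [abs_div, abs_of_pos (hden i), div_lt_one (hden i), abs_lt]
      constructor <;> linarith [hτi i, hτ]
    have hAξ : |A i * ξ| < 1 := by
      rw [abs_mul]
      calc |A i| * |ξ| ≤ 1 * |ξ| := by
            apply mul_le_mul_of_nonneg_right hAlt.le (abs_nonneg ξ)
        _ = |ξ| := one_mul _
        _ < 1 := hξ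
    have h1 : (0:ℝ) < 1 - A i * ξ := by have := abs_lt.mp hAξ; linarith
    have hg := (hasSum_geometric_of_abs_lt_one hAξ).mul_left (B i * (1 + A i) * ξ)
    have hshift : HasSum (fun r => w i (r+1) * ξ ^ (r+1))
        (B i * (1 + A i) * ξ * (1 - A i * ξ)⁻¹) := by
      refine hg.congr_fun fun r => ?_
      show w i (r+1) * ξ ^ (r+1) = B i * (1 + A i) * ξ * (A i * ξ) ^ r
      rw [hw]
      show B i * (1 + A i) * A i ^ r * ξ ^ (r+1) = B i * (1 + A i) * ξ * (A i * ξ) ^ r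
      rw [mul_pow, pow_succ]; ring
    have htot := (hasSum_nat_add_iff (f := fun n => w i n * ξ ^ n) 1).mp hshift
    have hden2 : τ * (1 + ξ) + 2 * τi i * (1 - ξ) = (2 * τi i + τ) * (1 - A i * ξ) := by
      rw [hA]; field_simp; ring
    have hd' : (τ + 2 * τi i) ≠ 0 := by linarith [hτi i]
    have hAB2 : (τ + 2 * τi i) * B i = a i * τ := by
      simp only [hB]
      field_simp
    convert htot using 1
    · rfl
    rw [Finset.sum_range_one]
    have hw0 : w i 0 = B i := by simp [hw, cqW]
    rw [hw0, pow_zero, mul_one]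
    have habs : B i * (1 + A i) * ξ * (1 - A i * ξ)⁻¹ + B i
        = B i * (1 + ξ) / (1 - A i * ξ) := by
      rw [eq_div_iff h1.ne']
      field_simp
      ring
    rw [habs, hden2, div_eq_div_iff (mul_ne_zero hd h1.ne') h1.ne']
    linear_combination (-(1 + ξ) * (1 - A i * ξ)) * hAB2
  -- Step 5: identify ω with the explicit weights
  have hωeq : ∀ n, ω n = ∑ i, w i n := by
    have hz := coeffs_eq_zero_of_hasSum_zero (fun n => ω n - ∑ i, w i n)
      (lt_min hε one_pos) ?_
    · intro n; have := hz n; linarith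
    · intro ξ hξ
      have h1 := hωs ξ (lt_of_lt_of_le hξ (min_le_left _ _))
      have h2 : HasSum (fun n => (∑ i, w i n) * ξ ^ n)
          (∑ i, a i * τ * (1 + ξ) / (τ * (1 + ξ) + 2 * τi i * (1 - ξ))) := by
        have := hasSum_sum (s := Finset.univ)
          (f := fun i n => w i n * ξ ^ n) fun i _ => hws i ξ (lt_of_lt_of_le hξ (min_le_right _ _))
        exact this.congr_fun fun n => by simp [Finset.sum_mul]
      simpa [sub_mul] using h1.sub h2
  -- Conclusion
  intro n
  calc (∑ i, p i n) = ∑ i, ∑ k ∈ Finset.range (n+1), w i (n-k) • e k :=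
        Finset.sum_congr rfl fun i _ => formula i n
    _ = ∑ k ∈ Finset.range (n+1), ∑ i, w i (n-k) • e k := Finset.sum_comm
    _ = ∑ k ∈ Finset.range (n+1), (∑ i, w i (n-k)) • e k :=
        Finset.sum_congr rfl fun k _ => (Finset.sum_smul).symm
    _ = ∑ k ∈ Finset.range (n+1), ω (n-k) • e k :=
        Finset.sum_congr rfl fun k _ => by rw [hωeq]
end

section
/- Let e, h, p_i : [0,T] → V be smooth fields with values in a real inner product space, satisfying the abstract Maxwell–Debye system: μ₀ h' = −Ce, ε₀ε_∞ e' + Σ_i p_i' = Cᵀh, and τ_i p_i' + p_i = ε₀(ε_{i,s}−ε'_{i,∞}) e, where C is a linear operator with adjoint Cᵀ. Define E(t) = ½( μ₀‖h‖² + ε₀ε_∞‖e‖² + Σ_i ‖p_i‖²/(ε₀(ε_{i,s}−ε'_{i,∞})) ). Then dE/dt = − Σ_i (τ_i/(ε₀(ε_{i,s}−ε'_{i,∞}))) ‖p_i'‖², so E is nonincreasing. -/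
open scoped RealInnerProductSpace

/-- Continuous energy-dissipation identity for the abstract Maxwell–Debye
system: `dE/dt = -∑ i, (τᵢ/(ε₀(ε_{i,s}-ε'_{i,∞}))) ‖pᵢ'‖²` on `[0,T]`, so the
energy is nonincreasing. -/
theorem maxwell_debye_energy_dissipation
    {V W : Type*} [NormedAddCommGroup V] [InnerProductSpace ℝ V]
    [NormedAddCommGroup W] [InnerProductSpace ℝ W]
    {m : ℕ} (T : ℝ) (hT : 0 < T)
    (μ0 ε0 εinfty : ℝ) (hμ0 : 0 < μ0) (hε0 : 0 < ε0) (hεinfty : 0 < εinfty)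
    (τi εs εinf : Fin m → ℝ) (hτi : ∀ i, 0 < τi i)
    (hεs : ∀ i, εinf i < εs i) (hεinf : ∀ i, 0 ≤ εinf i)
    (C : V →ₗ[ℝ] W) (Ct : W →ₗ[ℝ] V)
    (hadj : ∀ (v : V) (w : W), ⟪C v, w⟫ = ⟪v, Ct w⟫)
    (e e' : ℝ → V) (h h' : ℝ → W) (p p' : Fin m → ℝ → V)
    (hde : ∀ t ∈ Set.Icc 0 T, HasDerivWithinAt e (e' t) (Set.Icc 0 T) t)
    (hdh : ∀ t ∈ Set.Icc 0 T, HasDerivWithinAt h (h' t) (Set.Icc 0 T) t)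
    (hdp : ∀ i, ∀ t ∈ Set.Icc 0 T,
      HasDerivWithinAt (p i) (p' i t) (Set.Icc 0 T) t)
    (heq1 : ∀ t ∈ Set.Icc 0 T, μ0 • h' t = -(C (e t)))
    (heq2 : ∀ t ∈ Set.Icc 0 T,
      (ε0 * εinfty) • e' t + ∑ i, p' i t = Ct (h t))
    (heq3 : ∀ i, ∀ t ∈ Set.Icc 0 T,
      τi i • p' i t + p i t = (ε0 * (εs i - εinf i)) • e t)
    (E : ℝ → ℝ)
    (hE : ∀ t, E t = (1 / 2) * (μ0 * ‖h t‖ ^ 2 + ε0 * εinfty * ‖e t‖ ^ 2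
        + ∑ i, ‖p i t‖ ^ 2 / (ε0 * (εs i - εinf i)))) :
    (∀ t ∈ Set.Icc 0 T,
      HasDerivWithinAt E
        (-(∑ i, τi i / (ε0 * (εs i - εinf i)) * ‖p' i t‖ ^ 2))
        (Set.Icc 0 T) t) ∧
    AntitoneOn E (Set.Icc 0 T) := by
  have hc : ∀ i, 0 < ε0 * (εs i - εinf i) := fun i =>
    mul_pos hε0 (sub_pos.mpr (hεs i))
  have hEeq : E = fun t => (1 / 2) * (μ0 * ⟪h t, h t⟫ + ε0 * εinfty * ⟪e t, e t⟫
      + ∑ i, ⟪p i t, p i t⟫ / (ε0 * (εs i - εinf i))) := by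
    funext t
    simp [hE t, real_inner_self_eq_norm_sq]
  have key : ∀ t ∈ Set.Icc 0 T,
      HasDerivWithinAt E
        (-(∑ i, τi i / (ε0 * (εs i - εinf i)) * ‖p' i t‖ ^ 2))
        (Set.Icc 0 T) t := by
    intro t ht
    have Hh := (hdh t ht).inner ℝ (hdh t ht)
    have He := (hde t ht).inner ℝ (hde t ht)
    have Hp := fun i => (hdp i t ht).inner ℝ (hdp i t ht)
    have HD : HasDerivWithinAt E
        ((1 / 2) * (μ0 * (⟪h t, h' t⟫ + ⟪h' t, h t⟫)
          + ε0 * εinfty * (⟪e t, e' t⟫ + ⟪e' t, e t⟫)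
          + ∑ i, (⟪p i t, p' i t⟫ + ⟪p' i t, p i t⟫) / (ε0 * (εs i - εinf i))))
        (Set.Icc 0 T) t := by
      rw [hEeq]
      exact (((Hh.const_mul μ0).add (He.const_mul (ε0 * εinfty))).add
        (HasDerivWithinAt.fun_sum fun i _ => (Hp i).div_const _)).const_mul (1 / 2)
    convert HD using 1
    -- scalar identity
    have h1 : μ0 * ⟪h' t, h t⟫ = -⟪e t, Ct (h t)⟫ := by
      have := heq1 t ht
      calc μ0 * ⟪h' t, h t⟫ = ⟪μ0 • h' t, h t⟫ := (real_inner_smul_left _ _ _).symm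
        _ = ⟪-(C (e t)), h t⟫ := by rw [this]
        _ = -⟪C (e t), h t⟫ := by rw [inner_neg_left]
        _ = -⟪e t, Ct (h t)⟫ := by rw [hadj]
    have h2 : ε0 * εinfty * ⟪e' t, e t⟫ + ∑ i, ⟪p' i t, e t⟫
        = ⟪e t, Ct (h t)⟫ := by
      have := heq2 t ht
      have h2' : ⟪(ε0 * εinfty) • e' t + ∑ i, p' i t, e t⟫ = ⟪Ct (h t), e t⟫ := by
        rw [this]
      rw [inner_add_left, real_inner_smul_left, sum_inner] at h2'
      rw [h2', real_inner_comm]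
    have h3 : ∀ i, ⟪p' i t, p i t⟫
        = (ε0 * (εs i - εinf i)) * ⟪p' i t, e t⟫ - τi i * ‖p' i t‖ ^ 2 := by
      intro i
      have hp : p i t = (ε0 * (εs i - εinf i)) • e t - τi i • p' i t := by
        have := heq3 i t ht
        rw [← this]; abel
      rw [hp, inner_sub_right, real_inner_smul_right, real_inner_smul_right,
        real_inner_self_eq_norm_sq]
    have hsum : ∀ i, (⟪p i t, p' i t⟫ + ⟪p' i t, p i t⟫) / (ε0 * (εs i - εinf i))
        = 2 * ⟪p' i t, e t⟫ - 2 * (τi i / (ε0 * (εs i - εinf i)) * ‖p' i t‖ ^ 2) := by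
      intro i
      rw [real_inner_comm (p' i t) (p i t), h3 i]
      have hne := (hc i).ne'
      have hne2 : εs i - εinf i ≠ 0 := (sub_pos.mpr (hεs i)).ne'
      field_simp
      ring
    have hch : ⟪h t, h' t⟫ = ⟪h' t, h t⟫ := real_inner_comm _ _
    have hce : ⟪e t, e' t⟫ = ⟪e' t, e t⟫ := real_inner_comm _ _
    rw [hch, hce, Finset.sum_congr rfl fun i _ => hsum i, Finset.sum_sub_distrib,
      ← Finset.mul_sum, ← Finset.mul_sum]
    linear_combination -h1 - h2
  refine ⟨key, ?_⟩
  apply antitoneOn_of_hasDerivWithinAt_nonpos (convex_Icc 0 T)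
    (f' := fun t => -(∑ i, τi i / (ε0 * (εs i - εinf i)) * ‖p' i t‖ ^ 2))
  · exact fun t ht => (key t ht).continuousWithinAt
  · intro x hx
    exact (key x (interior_subset hx)).mono interior_subset
  · intro x hx
    simp only [neg_nonpos]
    apply Finset.sum_nonneg
    intro i _
    exact mul_nonneg (div_nonneg (hτi i).le (hc i).le) (by positivity)
end
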